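/- 2D generalized Lax–Friedrichs splitting property: let Q ≥ 1, let ω₁,…,ω_Q > 0 with Σ_i ω_i = 1, let Δx, Δy > 0, and let Ū^i, Ũ^i, Û^i, Ǔ^i ∈ 𝒢 (i = 1,…,Q) with assigned positive pressures satisfy the 2D discrete divergence-free condition (Σ_i ω_i(B̄₁^i − B̃₁^i))/Δx + (Σ_i ω_i(B̂₂^i − B̌₂^i))/Δy = 0. If α₁ > max_{1≤i≤Q} α₁(Ū^i, Ũ^i) and α₂ > max_{1≤i≤Q} α₂(Û^i, Ǔ^i), then the state Ū := [ 1/(2(α₁/Δx + α₂/Δy)) ] · Σ_{i=1}^{Q} ω_i [ (α₁/Δx)( Ū^i − F₁(Ū^i)/α₁ + Ũ^i + F₁(Ũ^i)/α₁ ) + (α₂/Δy)( Û^i − F₂(Û^i)/α₂ + Ǔ^i + F₂(Ǔ^i)/α₂ ) ] belongs to 𝒢. -/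

import Mathlib

open scoped BigOperators

noncomputable section

/-- Euclidean dot product on ℝ³. -/
def dot3 (a b : Fin 3 → ℝ) : ℝ := ∑ j, a j * b j

/-- Squared Euclidean norm on ℝ³. -/
def normSq3 (a : Fin 3 → ℝ) : ℝ := ∑ j, (a j) ^ 2

/-- Momentum components of a state `U = (ρ, m, B, E) ∈ ℝ⁸`. -/
def mC (U : Fin 8 → ℝ) : Fin 3 → ℝ := ![U 1, U 2, U 3]

/-- Magnetic-field components of a state. -/
def BC (U : Fin 8 → ℝ) : Fin 3 → ℝ := ![U 4, U 5, U 6]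

/-- Velocity components `v = m / ρ`. -/
def velC (U : Fin 8 → ℝ) : Fin 3 → ℝ := fun j => mC U j / U 0

/-- Internal energy `𝓔(U) = E − (|m|²/ρ + |B|²)/2`. -/
def intE (U : Fin 8 → ℝ) : ℝ := U 7 - (normSq3 (mC U) / U 0 + normSq3 (BC U)) / 2

/-- The admissible set `𝒢`. -/
def admisSet : Set (Fin 8 → ℝ) := {U | 0 < U 0 ∧ 0 < intE U}

/-- The vector `n* = (|v*|²/2, −v*, −B*, 1) ∈ ℝ⁸`. -/
def nstar (vs Bs : Fin 3 → ℝ) : Fin 8 → ℝ :=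
  ![normSq3 vs / 2, -vs 0, -vs 1, -vs 2, -Bs 0, -Bs 1, -Bs 2, 1]

/-- Euclidean dot product on ℝ⁸. -/
def dot8 (U V : Fin 8 → ℝ) : ℝ := ∑ k, U k * V k

/-- Flux `F_i(U)` of a state `U` with assigned pressure `p`, in direction `i`. -/
def flux (p : ℝ) (i : Fin 3) (U : Fin 8 → ℝ) : Fin 8 → ℝ :=
  let ρ := U 0
  let v := velC U
  let B := BC U
  let ptot := p + normSq3 B / 2
  ![ρ * v i,
    ρ * v i * v 0 - B i * B 0 + (if i = 0 then ptot else 0),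
    ρ * v i * v 1 - B i * B 1 + (if i = 1 then ptot else 0),
    ρ * v i * v 2 - B i * B 2 + (if i = 2 then ptot else 0),
    v i * B 0 - B i * v 0,
    v i * B 1 - B i * v 1,
    v i * B 2 - B i * v 2,
    v i * (U 7 + ptot) - B i * dot3 v B]

/-- The fast-speed-type quantity built from a sound-speed-like value `cs`:
`(1/√2)·√( cs² + |B|²/ρ + √((cs² + |B|²/ρ)² − 4cs²B_i²/ρ) )`. -/
def fastLike (cs : ℝ) (U : Fin 8 → ℝ) (i : Fin 3) : ℝ :=
  (1 / Real.sqrt 2) *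
    Real.sqrt (cs ^ 2 + normSq3 (BC U) / U 0 +
      Real.sqrt ((cs ^ 2 + normSq3 (BC U) / U 0) ^ 2 - 4 * cs ^ 2 * (BC U i) ^ 2 / U 0))

/-- `𝓢_s = p/(ρ√(2e))` for a state `U` with pressure `p`. -/
def sSound (p : ℝ) (U : Fin 8 → ℝ) : ℝ :=
  p / (U 0 * Real.sqrt (2 * (intE U / U 0)))

/-- `𝓢_i` for a state `U` with pressure `p`. -/
def sFast (p : ℝ) (U : Fin 8 → ℝ) (i : Fin 3) : ℝ := fastLike (sSound p U) U i

/-- `f(U, Ũ; σ) = (|B̃ − B|/√2)·√(σ²/ρ + (1−σ)²/ρ̃)`. -/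
def fCoup (U Ut : Fin 8 → ℝ) (σ : ℝ) : ℝ :=
  (Real.sqrt (normSq3 (fun j => BC Ut j - BC U j)) / Real.sqrt 2) *
    Real.sqrt (σ ^ 2 / U 0 + (1 - σ) ^ 2 / Ut 0)

/-- `α_i(U, Ũ; σ)` for states `U, Ũ` with pressures `p, p̃`. -/
def alphaSig (i : Fin 3) (U Ut : Fin 8 → ℝ) (p pt : ℝ) (σ : ℝ) : ℝ :=
  max (max (|velC U i| + sFast p U i) (|velC Ut i| + sFast pt Ut i))
      (|σ * velC U i + (1 - σ) * velC Ut i| + max (sFast p U i) (sFast pt Ut i))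
  + fCoup U Ut σ

/-- `α_i(U, Ũ) = inf_{σ ∈ ℝ} α_i(U, Ũ; σ)`. -/
def alphaInf (i : Fin 3) (U Ut : Fin 8 → ℝ) (p pt : ℝ) : ℝ :=
  ⨅ σ : ℝ, alphaSig i U Ut p pt σ

/-- Ideal-EOS pressure `p = (γ−1)ρe = (γ−1)𝓔(U)`. -/
def idealP (γ : ℝ) (U : Fin 8 → ℝ) : ℝ := (γ - 1) * intE U

/-- Ideal-EOS sound speed `𝓒_s = √(γp/ρ)`. -/
def cSound (γ : ℝ) (U : Fin 8 → ℝ) : ℝ := Real.sqrt (γ * idealP γ U / U 0)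

/-- Ideal-EOS fast speed `𝓒_i`. -/
def cFast (γ : ℝ) (U : Fin 8 → ℝ) (i : Fin 3) : ℝ := fastLike (cSound γ U) U i

/-- Ideal-EOS spectral radius `𝓡_i(U) = |v_i| + 𝓒_i`. -/
def specR (γ : ℝ) (i : Fin 3) (U : Fin 8 → ℝ) : ℝ := |velC U i| + cFast γ U i

/-- Pressure of a state under a general EOS function `P(ρ, e)`. -/
def presOf (P : ℝ → ℝ → ℝ) (U : Fin 8 → ℝ) : ℝ := P (U 0) (intE U / U 0)

/-- Lax–Friedrichs numerical flux with viscosity `α`, under EOS function `P`. -/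
def lfFlux (P : ℝ → ℝ → ℝ) (α : ℝ) (i : Fin 3) (Um Up : Fin 8 → ℝ) : Fin 8 → ℝ :=
  (1 / 2 : ℝ) • (flux (presOf P Um) i Um + flux (presOf P Up) i Up - α • (Up - Um))

/-- Lax–Friedrichs numerical flux with viscosity `α`, ideal EOS of index `γ`. -/
def lfFluxIdeal (γ : ℝ) (α : ℝ) (i : Fin 3) (Um Up : Fin 8 → ℝ) : Fin 8 → ℝ :=
  (1 / 2 : ℝ) • (flux (idealP γ Um) i Um + flux (idealP γ Up) i Up - α • (Up - Um))

lemma normSq3_nonneg (a : Fin 3 → ℝ) : 0 ≤ normSq3 a :=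
  Finset.sum_nonneg fun _ _ => sq_nonneg _

lemma dot3_sq_le (a b : Fin 3 → ℝ) : (dot3 a b) ^ 2 ≤ normSq3 a * normSq3 b := by
  simp only [dot3, normSq3, Fin.sum_univ_three]
  nlinarith [sq_nonneg (a 0 * b 1 - a 1 * b 0), sq_nonneg (a 0 * b 2 - a 2 * b 0),
    sq_nonneg (a 1 * b 2 - a 2 * b 1)]

lemma sq_i_le (a : Fin 3 → ℝ) (i : Fin 3) : (a i) ^ 2 ≤ normSq3 a := by
  have h : normSq3 a = a 0 ^ 2 + a 1 ^ 2 + a 2 ^ 2 := by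
    simp [normSq3, Fin.sum_univ_three]
  fin_cases i
  · rw [h]; show a 0 ^ 2 ≤ _; nlinarith [sq_nonneg (a 1), sq_nonneg (a 2)]
  · rw [h]; show a 1 ^ 2 ≤ _; nlinarith [sq_nonneg (a 0), sq_nonneg (a 2)]
  · rw [h]; show a 2 ^ 2 ≤ _; nlinarith [sq_nonneg (a 0), sq_nonneg (a 1)]

lemma sSound_pos {p : ℝ} {U : Fin 8 → ℝ} (hU : U ∈ admisSet) (hp : 0 < p) :
    0 < sSound p U := by
  obtain ⟨hρ, hE⟩ := hU
  have he : 0 < 2 * (intE U / U 0) := by positivity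
  have := Real.sqrt_pos.mpr he
  exact div_pos hp (by positivity)

lemma sSound_sq {p : ℝ} {U : Fin 8 → ℝ} (hU : U ∈ admisSet) (hp : 0 < p) :
    (sSound p U) ^ 2 = p ^ 2 / (2 * U 0 * intE U) := by
  obtain ⟨hρ, hE⟩ := hU
  have he : (0:ℝ) ≤ 2 * (intE U / U 0) := by positivity
  rw [sSound, div_pow, mul_pow, Real.sq_sqrt he]
  field_simp

lemma sqrt_ge_of_sq_ge {s t : ℝ} (hs : 0 ≤ s) (h : t ^ 2 ≤ s ^ 2) : t ≤ s := by
  rcases le_or_gt t 0 with h' | h'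
  · linarith
  · nlinarith

lemma fast_abstract {ρ Z2 n c S : ℝ} (hρ : 0 < ρ) (hZ2 : 0 < Z2) (hc0 : 0 ≤ c) (hcn : c ≤ n)
    (hS : S = (1 / Real.sqrt 2) *
      Real.sqrt (Z2 + n / ρ + Real.sqrt ((Z2 + n / ρ) ^ 2 - 4 * Z2 * c / ρ))) :
    0 ≤ S ∧ Z2 ≤ S ^ 2 ∧ c ≤ ρ * S ^ 2 ∧
      ρ * S ^ 4 - (ρ * Z2 + n) * S ^ 2 + Z2 * c = 0 := by
  have hn0 : 0 ≤ n := le_trans hc0 hcn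
  have hD : (Z2 + n / ρ) ^ 2 - 4 * Z2 * c / ρ
      = (Z2 - n / ρ) ^ 2 + 4 * Z2 * (n - c) / ρ := by field_simp; ring
  have hDnn : 0 ≤ (Z2 + n / ρ) ^ 2 - 4 * Z2 * c / ρ := by
    rw [hD]
    have h2 : 0 ≤ 4 * Z2 * (n - c) / ρ := by
      apply div_nonneg _ hρ.le; nlinarith
    linarith [sq_nonneg (Z2 - n / ρ)]
  set s := Real.sqrt ((Z2 + n / ρ) ^ 2 - 4 * Z2 * c / ρ) with hsdef
  have hs0 : 0 ≤ s := Real.sqrt_nonneg _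
  have hs2 : s ^ 2 = (Z2 + n / ρ) ^ 2 - 4 * Z2 * c / ρ := Real.sq_sqrt hDnn
  have hynn : 0 ≤ Z2 + n / ρ + s := by
    have : 0 ≤ n / ρ := div_nonneg hn0 hρ.le
    linarith
  have hS0 : 0 ≤ S := by rw [hS]; positivity
  have hX : S ^ 2 = (Z2 + n / ρ + s) / 2 := by
    rw [hS, mul_pow, div_pow, one_pow, Real.sq_sqrt (by norm_num : (0:ℝ) ≤ 2),
      Real.sq_sqrt hynn]
    ring
  -- ρ-scaled s
  have hs'2 : (ρ * s) ^ 2 = (ρ * Z2 + n) ^ 2 - 4 * ρ * Z2 * c := by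
    rw [mul_pow, hs2]; field_simp
  have h2ρ : 2 * (ρ * S ^ 2) = ρ * Z2 + n + ρ * s := by
    rw [hX]; field_simp
  have hs'0 : 0 ≤ ρ * s := by positivity
  have hZX : Z2 ≤ S ^ 2 := by
    have key : ρ * Z2 - n ≤ ρ * s := by
      apply sqrt_ge_of_sq_ge hs'0
      nlinarith [mul_nonneg (mul_nonneg hρ.le hZ2.le) (sub_nonneg.mpr hcn)]
    nlinarith
  have hcX : c ≤ ρ * S ^ 2 := by
    have key : 2 * c - ρ * Z2 - n ≤ ρ * s := by
      apply sqrt_ge_of_sq_ge hs'0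
      nlinarith [mul_nonneg hc0 (sub_nonneg.mpr hcn)]
    nlinarith
  have hid : ρ * S ^ 4 - (ρ * Z2 + n) * S ^ 2 + Z2 * c = 0 := by
    have e2 : (2 * ρ * S ^ 2 - ρ * Z2 - n) ^ 2 = (ρ * Z2 + n) ^ 2 - 4 * ρ * Z2 * c := by
      rw [show 2 * ρ * S ^ 2 - ρ * Z2 - n = ρ * s from by linarith]; exact hs'2
    have h : ρ * (ρ * S ^ 4 - (ρ * Z2 + n) * S ^ 2 + Z2 * c) = 0 := by
      linear_combination (1/4) * e2
    rcases mul_eq_zero.mp h with h' | h'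
    · exact absurd h' hρ.ne'
    · exact h'
  exact ⟨hS0, hZX, hcX, hid⟩

lemma sFast_facts {p : ℝ} {U : Fin 8 → ℝ} (hU : U ∈ admisSet) (hp : 0 < p) (i : Fin 3) :
    0 ≤ sFast p U i ∧
    (sSound p U) ^ 2 ≤ (sFast p U i) ^ 2 ∧
    (BC U i) ^ 2 ≤ U 0 * (sFast p U i) ^ 2 ∧
    U 0 * (sFast p U i) ^ 4 - (U 0 * (sSound p U) ^ 2 + normSq3 (BC U)) * (sFast p U i) ^ 2
      + (sSound p U) ^ 2 * (BC U i) ^ 2 = 0 := by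
  apply fast_abstract hU.1 (by have := sSound_pos hU hp; positivity) (sq_nonneg _) (sq_i_le _ i)
  rfl
lemma comp1 (i : Fin 3) (p : ℝ) (B u b : Fin 3 → ℝ) :
    p * u i + u i * dot3 B b - B i * dot3 u b
      = dot3 u (fun j => (if j = i then p + dot3 B b else 0) - B i * b j) := by
  fin_cases i <;> simp [dot3, Fin.sum_univ_three] <;> ring

lemma comp2 (i : Fin 3) (p : ℝ) (B b : Fin 3 → ℝ) :
    normSq3 (fun j => (if j = i then p + dot3 B b else 0) - B i * b j)
      = (p + (dot3 B b - B i * b i)) ^ 2 + (B i) ^ 2 * (normSq3 b - (b i) ^ 2) := by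
  fin_cases i <;> simp [normSq3, dot3, Fin.sum_univ_three] <;> ring

lemma comp3 (i : Fin 3) (B b : Fin 3 → ℝ) :
    (dot3 B b - B i * b i) ^ 2 ≤ (normSq3 B - (B i) ^ 2) * (normSq3 b - (b i) ^ 2) := by
  fin_cases i <;> simp [normSq3, dot3, Fin.sum_univ_three] <;>
    nlinarith [sq_nonneg (B 0 * b 1 - B 1 * b 0), sq_nonneg (B 0 * b 2 - B 2 * b 0),
      sq_nonneg (B 1 * b 2 - B 2 * b 1)]

set_option maxHeartbeats 800000 in
lemma star_abstract (ρ E p Z2 X S nB2 Bi nu2 nb2 bi β q : ℝ)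
    (hρ : 0 < ρ) (hE : 0 < E) (hZ2 : 0 < Z2)
    (hS0 : 0 ≤ S) (hX : X = S ^ 2) (hZX : Z2 ≤ X) (hcX : Bi ^ 2 ≤ ρ * X)
    (hid' : ρ * X ^ 2 - (ρ * Z2 + nB2) * X + Z2 * Bi ^ 2 = 0)
    (hZp : Z2 * (2 * ρ * E) = p ^ 2)
    (hnu20 : 0 ≤ nu2) (hbi : bi ^ 2 ≤ nb2) (hBi : Bi ^ 2 ≤ nB2)
    (hβx : β ^ 2 ≤ (nB2 - Bi ^ 2) * (nb2 - bi ^ 2))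
    (hq : q ^ 2 ≤ nu2 * ((p + β) ^ 2 + Bi ^ 2 * (nb2 - bi ^ 2))) :
    |q| ≤ S * (E + ρ * nu2 / 2 + nb2 / 2) := by
  have hXpos : 0 < X := lt_of_lt_of_le hZ2 hZX
  have hnb20 : 0 ≤ nb2 := le_trans (sq_nonneg _) hbi
  set x := nb2 - bi ^ 2 with hxdef
  have hx0 : 0 ≤ x := by rw [hxdef]; linarith
  set A1 := Z2 ^ 2 * (ρ * X - Bi ^ 2) * x with hA1def
  set B1 := p ^ 2 * X * (X - Z2) with hB1def
  have hA10 : 0 ≤ A1 :=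
    mul_nonneg (mul_nonneg (sq_nonneg _) (by linarith)) hx0
  have hB10 : 0 ≤ B1 :=
    mul_nonneg (mul_nonneg (sq_nonneg _) hXpos.le) (by linarith)
  have e4 : A1 * B1 = Z2 ^ 2 * p ^ 2 * X ^ 2 * ((nB2 - Bi ^ 2) * x) := by
    rw [hA1def, hB1def]
    linear_combination (Z2 ^ 2 * p ^ 2 * X * x) * hid'
  have hprod : (p * β * X * Z2) ^ 2 ≤ A1 * B1 := by
    rw [e4]
    have e8 : (p * β * X * Z2) ^ 2 = (p * X * Z2) ^ 2 * β ^ 2 := by ring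
    have e9 : Z2 ^ 2 * p ^ 2 * X ^ 2 * ((nB2 - Bi ^ 2) * x)
        = (p * X * Z2) ^ 2 * ((nB2 - Bi ^ 2) * x) := by rw [hxdef]; ring
    linarith [mul_le_mul_of_nonneg_left hβx (sq_nonneg (p * X * Z2))]
  have hsum : 2 * (p * β * X * Z2) ≤ A1 + B1 := by
    apply sqrt_ge_of_sq_ge (by linarith)
    have e5 : (A1 + B1) ^ 2 = (A1 - B1) ^ 2 + 4 * (A1 * B1) := by ring
    have e6 : (2 * (p * β * X * Z2)) ^ 2 = 4 * ((p * β * X * Z2) ^ 2) := by ring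
    linarith [hprod, sq_nonneg (A1 - B1)]
  have hidx : Z2 * x * (ρ * X ^ 2 - (ρ * Z2 + nB2) * X + Z2 * Bi ^ 2) = 0 := by
    rw [hid']; ring
  have h1 : 0 ≤ Z2 * X * ((nB2 - Bi ^ 2) * x - β ^ 2) :=
    mul_nonneg (mul_nonneg hZ2.le hXpos.le) (by linarith)
  have h4 : 0 ≤ Z2 * ρ * X ^ 2 * bi ^ 2 := by positivity
  have hK2m : Z2 * X * ((p + β) ^ 2 + Bi ^ 2 * x) ≤ X * (X * p ^ 2 + Z2 * ρ * X * nb2) := by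
    have eE : X * (X * p ^ 2 + Z2 * ρ * X * nb2) - Z2 * X * ((p + β) ^ 2 + Bi ^ 2 * x)
        = (A1 + B1 - 2 * (p * β * X * Z2)) + Z2 * X * ((nB2 - Bi ^ 2) * x - β ^ 2)
          + Z2 * x * (ρ * X ^ 2 - (ρ * Z2 + nB2) * X + Z2 * Bi ^ 2)
          + Z2 * ρ * X ^ 2 * bi ^ 2 := by
      rw [hA1def, hB1def, hxdef]; ring
    linarith [hsum, h1, hidx, h4, eE]
  have hK2 : (p + β) ^ 2 + Bi ^ 2 * x ≤ X * (2 * ρ * E + ρ * nb2) := by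
    have hmul : Z2 * X * ((p + β) ^ 2 + Bi ^ 2 * x)
        ≤ Z2 * X * (X * (2 * ρ * E + ρ * nb2)) := by
      calc Z2 * X * ((p + β) ^ 2 + Bi ^ 2 * x) ≤ X * (X * p ^ 2 + Z2 * ρ * X * nb2) := hK2m
        _ = Z2 * X * (X * (2 * ρ * E + ρ * nb2)) := by linear_combination (X ^ 2) * hZp.symm
    exact le_of_mul_le_mul_left hmul (by positivity)
  have hq2 : q ^ 2 ≤ X * (E + ρ * nu2 / 2 + nb2 / 2) ^ 2 := by
    calc q ^ 2 ≤ nu2 * ((p + β) ^ 2 + Bi ^ 2 * x) := hq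
      _ ≤ nu2 * (X * (2 * ρ * E + ρ * nb2)) := mul_le_mul_of_nonneg_left hK2 hnu20
      _ ≤ X * (E + ρ * nu2 / 2 + nb2 / 2) ^ 2 := by
          have e7 : X * (E + ρ * nu2 / 2 + nb2 / 2) ^ 2 - nu2 * (X * (2 * ρ * E + ρ * nb2))
              = X * (E + nb2 / 2 - ρ * nu2 / 2) ^ 2 := by ring
          linarith [mul_nonneg hXpos.le (sq_nonneg (E + nb2 / 2 - ρ * nu2 / 2))]
  have hRHS0 : 0 ≤ S * (E + ρ * nu2 / 2 + nb2 / 2) := by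
    apply mul_nonneg hS0; positivity
  rw [abs_le]
  constructor
  · have := sqrt_ge_of_sq_ge hRHS0 (t := -q)
      (by rw [mul_pow, ← hX]; linarith [hq2, sq_abs q, sq_nonneg q, neg_sq q])
    linarith
  · exact sqrt_ge_of_sq_ge hRHS0 (by rw [mul_pow, ← hX]; exact hq2)

/-- The per-state key inequality (★). -/
lemma star {p : ℝ} {U : Fin 8 → ℝ} (hU : U ∈ admisSet) (hp : 0 < p) (i : Fin 3)
    (u b : Fin 3 → ℝ) :
    |p * u i + u i * dot3 (BC U) b - BC U i * dot3 u b| ≤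
      sFast p U i * (intE U + U 0 * normSq3 u / 2 + normSq3 b / 2) := by
  obtain ⟨hS0, hZX, hcX, hid4⟩ := sFast_facts hU hp i
  have hρ : 0 < U 0 := hU.1
  have hE : 0 < intE U := hU.2
  have hZ0 : 0 < sSound p U := sSound_pos hU hp
  refine star_abstract (U 0) (intE U) p ((sSound p U) ^ 2) ((sFast p U i) ^ 2)
    (sFast p U i) (normSq3 (BC U)) (BC U i) (normSq3 u) (normSq3 b) (b i)
    (dot3 (BC U) b - BC U i * b i) _ hρ hE (by positivity) hS0 rfl hZX hcX
    (by linear_combination hid4) ?_ (normSq3_nonneg u) (sq_i_le b i) (sq_i_le (BC U) i)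
    (comp3 i (BC U) b) ?_
  · rw [sSound_sq hU hp]; field_simp
  · rw [comp1 i p (BC U) u b, ← comp2 i p (BC U) b]
    exact dot3_sq_le u _
lemma normSq3_add_le (a c : Fin 3 → ℝ) :
    normSq3 (fun j => a j + c j) ≤ 2 * (normSq3 a + normSq3 c) := by
  simp only [normSq3, Fin.sum_univ_three]
  nlinarith [sq_nonneg (a 0 - c 0), sq_nonneg (a 1 - c 1), sq_nonneg (a 2 - c 2)]

lemma fCoup_nonneg (U Ut : Fin 8 → ℝ) (σ : ℝ) : 0 ≤ fCoup U Ut σ := by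
  rw [fCoup]; positivity

lemma fCoup_sq {U Ut : Fin 8 → ℝ} (hρ : 0 < U 0) (hρt : 0 < Ut 0) (σ : ℝ) :
    (fCoup U Ut σ) ^ 2
      = normSq3 (fun j => BC Ut j - BC U j) * (σ ^ 2 / U 0 + (1 - σ) ^ 2 / Ut 0) / 2 := by
  rw [fCoup, mul_pow, div_pow, Real.sq_sqrt (normSq3_nonneg _),
    Real.sq_sqrt (by norm_num : (0:ℝ) ≤ 2), Real.sq_sqrt (by positivity)]
  ring

set_option maxHeartbeats 1000000 in
/-- Absorption of the coupling term `C` by the `f`-budget. -/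
lemma absorb_abstract (ρ ρt σ F nd ui uti nu2 nut2 db nb2 nbt2 M : ℝ)
    (hρ : 0 < ρ) (hρt : 0 < ρt) (hF0 : 0 ≤ F)
    (hF2 : F ^ 2 = nd * (σ ^ 2 / ρ + (1 - σ) ^ 2 / ρt) / 2)
    (hnd : 0 ≤ nd)
    (hui : ui ^ 2 ≤ nu2) (huti : uti ^ 2 ≤ nut2)
    (hdb2 : db ^ 2 ≤ nd * M) (hM0 : 0 ≤ M) (hM : M ≤ 2 * (nb2 + nbt2))
    (hnb2 : 0 ≤ nb2) (hnbt2 : 0 ≤ nbt2) :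
    |(σ * ui + (1 - σ) * uti) * db / 2|
      ≤ F * (ρ * nu2 / 2 + ρt * nut2 / 2 + nb2 / 2 + nbt2 / 2) := by
  have hnu2 : 0 ≤ nu2 := le_trans (sq_nonneg _) hui
  have hnut2 : 0 ≤ nut2 := le_trans (sq_nonneg _) huti
  set s := σ * ui + (1 - σ) * uti with hsdef
  set H := ρ * ui ^ 2 + ρt * uti ^ 2 with hHdef
  have hH0 : 0 ≤ H := by positivity
  -- Cauchy–Schwarz for s
  have hs2 : s ^ 2 * (ρ * ρt) ≤ (σ ^ 2 * ρt + (1 - σ) ^ 2 * ρ) * H := by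
    rw [hsdef, hHdef]
    nlinarith [sq_nonneg (σ * ρt * uti - (1 - σ) * ρ * ui)]
  -- main squared bound
  have hT : ρ * nu2 / 2 + ρt * nut2 / 2 + nb2 / 2 + nbt2 / 2 ≥ H / 2 + M / 4 := by
    rw [hHdef]
    linarith [mul_le_mul_of_nonneg_left hui hρ.le, mul_le_mul_of_nonneg_left huti hρt.le]
  have hT0 : 0 ≤ H / 2 + M / 4 := by positivity
  have hC2 : (s * db / 2) ^ 2 ≤ F ^ 2 * (H * M / 2) := by
    have h1 : s ^ 2 * db ^ 2 ≤ (σ ^ 2 * ρt + (1 - σ) ^ 2 * ρ) * H * (nd * M) / (ρ * ρt) := by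
      rw [← sub_nonneg]
      have e1 : (σ ^ 2 * ρt + (1 - σ) ^ 2 * ρ) * H * (nd * M) / (ρ * ρt) - s ^ 2 * db ^ 2
          = (((σ ^ 2 * ρt + (1 - σ) ^ 2 * ρ) * H - s ^ 2 * (ρ * ρt)) * (nd * M)
              + s ^ 2 * (ρ * ρt) * (nd * M - db ^ 2)) / (ρ * ρt) := by
        field_simp
        ring
      rw [e1]
      apply div_nonneg _ (by positivity)
      have h2 : 0 ≤ ((σ ^ 2 * ρt + (1 - σ) ^ 2 * ρ) * H - s ^ 2 * (ρ * ρt)) * (nd * M) :=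
        mul_nonneg (by linarith) (mul_nonneg hnd hM0)
      linarith [mul_nonneg (mul_nonneg (sq_nonneg s) (mul_pos hρ hρt).le)
        (sub_nonneg.mpr hdb2)]
    have e2 : F ^ 2 * (H * M / 2) = (σ ^ 2 * ρt + (1 - σ) ^ 2 * ρ) * H * (nd * M) / (ρ * ρt) / 4 := by
      rw [hF2]; field_simp; ring
    have e3 : (s * db / 2) ^ 2 = s ^ 2 * db ^ 2 / 4 := by ring
    rw [e2, e3]; linarith
  have hC2' : (s * db / 2) ^ 2 ≤ (F * (H / 2 + M / 4)) ^ 2 := by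
    calc (s * db / 2) ^ 2 ≤ F ^ 2 * (H * M / 2) := hC2
      _ ≤ F ^ 2 * ((H / 2 + M / 4) ^ 2) := by
          have e : (H / 2 + M / 4) ^ 2 - H * M / 2 = (H / 2 - M / 4) ^ 2 := by ring
          have : H * M / 2 ≤ (H / 2 + M / 4) ^ 2 := by linarith [sq_nonneg (H / 2 - M / 4)]
          exact mul_le_mul_of_nonneg_left this (sq_nonneg F)
      _ = (F * (H / 2 + M / 4)) ^ 2 := by ring
  have hFT0 : 0 ≤ F * (H / 2 + M / 4) := mul_nonneg hF0 hT0
  have hgoal : |s * db / 2| ≤ F * (H / 2 + M / 4) := by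
    rw [abs_le]
    constructor
    · have e : (-(s * db / 2)) ^ 2 = (s * db / 2) ^ 2 := by ring
      have h := sqrt_ge_of_sq_ge hFT0 (t := -(s * db / 2)) (by rw [e]; exact hC2')
      linarith
    · exact sqrt_ge_of_sq_ge hFT0 hC2'
  have hFT := mul_le_mul_of_nonneg_left hT hF0
  calc |s * db / 2| ≤ F * (H / 2 + M / 4) := hgoal
    _ ≤ F * (ρ * nu2 / 2 + ρt * nut2 / 2 + nb2 / 2 + nbt2 / 2) := hFT
lemma fin3_mk0 (h : 0 < 3) : (⟨0, h⟩ : Fin 3) = 0 := rfl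
lemma fin3_mk1 (h : 1 < 3) : (⟨1, h⟩ : Fin 3) = 1 := rfl
lemma fin3_mk2 (h : 2 < 3) : (⟨2, h⟩ : Fin 3) = 2 := rfl

lemma vec8_five {α : Type*} (a b c d e f g h : α) : ![a,b,c,d,e,f,g,h] 5 = f := rfl
lemma vec8_six {α : Type*} (a b c d e f g h : α) : ![a,b,c,d,e,f,g,h] 6 = g := rfl
lemma vec8_seven {α : Type*} (a b c d e f g h : α) : ![a,b,c,d,e,f,g,h] 7 = h := rfl

set_option maxHeartbeats 1000000 in
lemma state_identity1 (U : Fin 8 → ℝ) (hρ : U 0 ≠ 0) (vs Bs : Fin 3 → ℝ) :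
    dot8 U (nstar vs Bs)
      = intE U + U 0 * normSq3 (fun j => velC U j - vs j) / 2
        + normSq3 (fun j => BC U j - Bs j) / 2 - normSq3 Bs / 2 := by
  simp only [dot8, nstar, normSq3, dot3, intE, velC, mC, BC,
    Fin.sum_univ_eight, Fin.sum_univ_three,
    Matrix.cons_val_zero, Matrix.cons_val_one, Matrix.head_cons,
    Matrix.cons_val_two, Matrix.tail_cons, Matrix.cons_val_three,
    Matrix.cons_val_four, Matrix.cons_val_fin_one, Matrix.empty_val',
    Matrix.cons_val', Matrix.head_fin_const, vec8_five, vec8_six, vec8_seven]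
  field_simp
  ring

set_option maxHeartbeats 2000000 in
lemma state_identity2 (i : Fin 3) (p : ℝ) (U : Fin 8 → ℝ) (hρ : U 0 ≠ 0) (vs Bs : Fin 3 → ℝ) :
    dot8 (flux p i U) (nstar vs Bs)
      = velC U i * (intE U + U 0 * normSq3 (fun j => velC U j - vs j) / 2
          + normSq3 (fun j => BC U j - Bs j) / 2)
        + (p * (velC U i - vs i)
            + (velC U i - vs i) * dot3 (BC U) (fun j => BC U j - Bs j)
            - BC U i * dot3 (fun j => velC U j - vs j) (fun j => BC U j - Bs j))
        - (velC U i - vs i) * normSq3 (fun j => BC U j - Bs j) / 2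
        - vs i * normSq3 Bs / 2 + BC U i * dot3 vs Bs := by
  fin_cases i <;>
  · simp only [dot8, nstar, flux, normSq3, dot3, intE, velC, mC, BC,
      Fin.sum_univ_eight, Fin.sum_univ_three,
      Matrix.cons_val_zero, Matrix.cons_val_one, Matrix.head_cons,
      Matrix.cons_val_two, Matrix.tail_cons, Matrix.cons_val_three,
      Matrix.cons_val_four, Matrix.cons_val_fin_one, Matrix.empty_val',
      Matrix.cons_val', Matrix.head_fin_const, vec8_five, vec8_six, vec8_seven,
      fin3_mk0, fin3_mk1, fin3_mk2, Fin.isValue, Fin.reduceEq, reduceIte]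
    norm_num
    field_simp
    ring
lemma dot8_comb (U V W Z n : Fin 8 → ℝ) (a b : ℝ) :
    dot8 (U - a • V + W + b • Z) n
      = dot8 U n - a * dot8 V n + dot8 W n + b * dot8 Z n := by
  simp only [dot8, Pi.add_apply, Pi.sub_apply, Pi.smul_apply, smul_eq_mul,
    Fin.sum_univ_eight]
  ring

lemma sFast_pos {p : ℝ} {U : Fin 8 → ℝ} (hU : U ∈ admisSet) (hp : 0 < p) (i : Fin 3) :
    0 < sFast p U i := by
  obtain ⟨hS0, hZX, _, _⟩ := sFast_facts hU hp i
  have hZ := sSound_pos hU hp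
  rcases hS0.lt_or_eq with h | h
  · exact h
  · exfalso; rw [← h] at hZX; nlinarith
lemma mulb {a m S F T R : ℝ} (h : S + F + m ≤ a) (hTR : R ≤ T) (hR0 : 0 ≤ R) (hm : 0 ≤ m) :
    (S + F) * T + m * R ≤ a * T := by
  have hT0 : 0 ≤ T := le_trans hR0 hTR
  nlinarith [mul_nonneg (by linarith : (0:ℝ) ≤ a - S - F - m) hT0,
    mul_nonneg hm (sub_nonneg.mpr hTR)]

set_option maxHeartbeats 3000000 in
lemma pair_key (i : Fin 3) {U Ut : Fin 8 → ℝ} {p pt : ℝ}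
    (hU : U ∈ admisSet) (hUt : Ut ∈ admisSet) (hp : 0 < p) (hpt : 0 < pt)
    {α σ : ℝ} (hσα : alphaSig i U Ut p pt σ < α) (vs Bs : Fin 3 → ℝ) :
    (BC Ut i - BC U i) * dot3 vs Bs / α
      < dot8 (U - α⁻¹ • flux p i U + Ut + α⁻¹ • flux pt i Ut) (nstar vs Bs) + normSq3 Bs := by
  have hρ : 0 < U 0 := hU.1
  have hρt : 0 < Ut 0 := hUt.1
  have hE : 0 < intE U := hU.2
  have hEt : 0 < intE Ut := hUt.2
  have hS0 : 0 ≤ sFast p U i := (sFast_facts hU hp i).1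
  have hSt0 : 0 ≤ sFast pt Ut i := (sFast_facts hUt hpt i).1
  have hSpos : 0 < sFast p U i := sFast_pos hU hp i
  have hF0 : 0 ≤ fCoup U Ut σ := fCoup_nonneg U Ut σ
  -- bounds extracted from the alphaSig hypothesis
  rw [alphaSig] at hσα
  have hm1 : |velC U i| + sFast p U i
      ≤ max (max (|velC U i| + sFast p U i) (|velC Ut i| + sFast pt Ut i))
          (|σ * velC U i + (1 - σ) * velC Ut i| + max (sFast p U i) (sFast pt Ut i)) :=
    le_trans (le_max_left _ _) (le_max_left _ _)
  have hm2 : |velC Ut i| + sFast pt Ut i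
      ≤ max (max (|velC U i| + sFast p U i) (|velC Ut i| + sFast pt Ut i))
          (|σ * velC U i + (1 - σ) * velC Ut i| + max (sFast p U i) (sFast pt Ut i)) :=
    le_trans (le_max_right _ _) (le_max_left _ _)
  have hm3 : |σ * velC U i + (1 - σ) * velC Ut i| + max (sFast p U i) (sFast pt Ut i)
      ≤ max (max (|velC U i| + sFast p U i) (|velC Ut i| + sFast pt Ut i))
          (|σ * velC U i + (1 - σ) * velC Ut i| + max (sFast p U i) (sFast pt Ut i)) :=
    le_max_right _ _
  have h1 : |velC U i| + sFast p U i + fCoup U Ut σ < α := by linarith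
  have h2 : |velC Ut i| + sFast pt Ut i + fCoup U Ut σ < α := by linarith
  have h3 : |σ * velC U i + (1 - σ) * velC Ut i| + max (sFast p U i) (sFast pt Ut i)
      + fCoup U Ut σ < α := by linarith
  have hα0 : 0 < α := by
    have := abs_nonneg (velC U i); linarith
  -- the star bounds
  have star1 : |p * (velC U i - vs i)
      + (velC U i - vs i) * dot3 (BC U) (fun j => BC U j - Bs j)
      - BC U i * dot3 (fun j => velC U j - vs j) (fun j => BC U j - Bs j)|
      ≤ sFast p U i * (intE U + U 0 * normSq3 (fun j => velC U j - vs j) / 2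
          + normSq3 (fun j => BC U j - Bs j) / 2) :=
    star hU hp i (fun j => velC U j - vs j) (fun j => BC U j - Bs j)
  have star2 : |pt * (velC Ut i - vs i)
      + (velC Ut i - vs i) * dot3 (BC Ut) (fun j => BC Ut j - Bs j)
      - BC Ut i * dot3 (fun j => velC Ut j - vs j) (fun j => BC Ut j - Bs j)|
      ≤ sFast pt Ut i * (intE Ut + Ut 0 * normSq3 (fun j => velC Ut j - vs j) / 2
          + normSq3 (fun j => BC Ut j - Bs j) / 2) :=
    star hUt hpt i (fun j => velC Ut j - vs j) (fun j => BC Ut j - Bs j)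
  -- the absorption bound
  have habs : |(σ * (velC U i - vs i) + (1 - σ) * (velC Ut i - vs i))
        * dot3 (fun j => BC Ut j - BC U j) (fun j => (BC U j - Bs j) + (BC Ut j - Bs j)) / 2|
      ≤ fCoup U Ut σ * (U 0 * normSq3 (fun j => velC U j - vs j) / 2
          + Ut 0 * normSq3 (fun j => velC Ut j - vs j) / 2
          + normSq3 (fun j => BC U j - Bs j) / 2
          + normSq3 (fun j => BC Ut j - Bs j) / 2) := by
    apply absorb_abstract (U 0) (Ut 0) σ (fCoup U Ut σ)
      (normSq3 (fun j => BC Ut j - BC U j)) (velC U i - vs i) (velC Ut i - vs i)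
      (normSq3 (fun j => velC U j - vs j)) (normSq3 (fun j => velC Ut j - vs j))
      (dot3 (fun j => BC Ut j - BC U j) (fun j => (BC U j - Bs j) + (BC Ut j - Bs j)))
      (normSq3 (fun j => BC U j - Bs j)) (normSq3 (fun j => BC Ut j - Bs j))
      (normSq3 (fun j => (BC U j - Bs j) + (BC Ut j - Bs j)))
      hρ hρt hF0 (fCoup_sq hρ hρt σ) (normSq3_nonneg _)
      (sq_i_le (fun j => velC U j - vs j) i) (sq_i_le (fun j => velC Ut j - vs j) i)
      (dot3_sq_le _ _) (normSq3_nonneg _) (normSq3_add_le _ _)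
      (normSq3_nonneg _) (normSq3_nonneg _)
  -- the main identity
  have eC : normSq3 (fun j => BC U j - Bs j) - normSq3 (fun j => BC Ut j - Bs j)
      = -(dot3 (fun j => BC Ut j - BC U j) (fun j => (BC U j - Bs j) + (BC Ut j - Bs j))) := by
    simp only [normSq3, dot3, Fin.sum_univ_three]; ring
  have expand : α * (dot8 (U - α⁻¹ • flux p i U + Ut + α⁻¹ • flux pt i Ut) (nstar vs Bs)
        + normSq3 Bs)
      = α * (intE U + U 0 * normSq3 (fun j => velC U j - vs j) / 2
            + normSq3 (fun j => BC U j - Bs j) / 2 - normSq3 Bs / 2)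
        + α * (intE Ut + Ut 0 * normSq3 (fun j => velC Ut j - vs j) / 2
            + normSq3 (fun j => BC Ut j - Bs j) / 2 - normSq3 Bs / 2)
        - (velC U i * (intE U + U 0 * normSq3 (fun j => velC U j - vs j) / 2
              + normSq3 (fun j => BC U j - Bs j) / 2)
            + (p * (velC U i - vs i)
              + (velC U i - vs i) * dot3 (BC U) (fun j => BC U j - Bs j)
              - BC U i * dot3 (fun j => velC U j - vs j) (fun j => BC U j - Bs j))
            - (velC U i - vs i) * normSq3 (fun j => BC U j - Bs j) / 2
            - vs i * normSq3 Bs / 2 + BC U i * dot3 vs Bs)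
        + (velC Ut i * (intE Ut + Ut 0 * normSq3 (fun j => velC Ut j - vs j) / 2
              + normSq3 (fun j => BC Ut j - Bs j) / 2)
            + (pt * (velC Ut i - vs i)
              + (velC Ut i - vs i) * dot3 (BC Ut) (fun j => BC Ut j - Bs j)
              - BC Ut i * dot3 (fun j => velC Ut j - vs j) (fun j => BC Ut j - Bs j))
            - (velC Ut i - vs i) * normSq3 (fun j => BC Ut j - Bs j) / 2
            - vs i * normSq3 Bs / 2 + BC Ut i * dot3 vs Bs)
        + α * normSq3 Bs := by
    rw [dot8_comb, state_identity1 U hρ.ne' vs Bs, state_identity1 Ut hρt.ne' vs Bs,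
      state_identity2 i p U hρ.ne' vs Bs, state_identity2 i pt Ut hρt.ne' vs Bs]
    field_simp
    ring
  have key : α * (dot8 (U - α⁻¹ • flux p i U + Ut + α⁻¹ • flux pt i Ut) (nstar vs Bs)
        + normSq3 Bs) - (BC Ut i - BC U i) * dot3 vs Bs
      = (α - velC U i) * (intE U + U 0 * normSq3 (fun j => velC U j - vs j) / 2)
        + (α + velC Ut i) * (intE Ut + Ut 0 * normSq3 (fun j => velC Ut j - vs j) / 2)
        + (α - (σ * velC U i + (1 - σ) * velC Ut i)) * (normSq3 (fun j => BC U j - Bs j) / 2)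
        + (α + (σ * velC U i + (1 - σ) * velC Ut i)) * (normSq3 (fun j => BC Ut j - Bs j) / 2)
        - (σ * (velC U i - vs i) + (1 - σ) * (velC Ut i - vs i))
            * dot3 (fun j => BC Ut j - BC U j) (fun j => (BC U j - Bs j) + (BC Ut j - Bs j)) / 2
        - (p * (velC U i - vs i)
            + (velC U i - vs i) * dot3 (BC U) (fun j => BC U j - Bs j)
            - BC U i * dot3 (fun j => velC U j - vs j) (fun j => BC U j - Bs j))
        + (pt * (velC Ut i - vs i)
            + (velC Ut i - vs i) * dot3 (BC Ut) (fun j => BC Ut j - Bs j)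
            - BC Ut i * dot3 (fun j => velC Ut j - vs j) (fun j => BC Ut j - Bs j)) := by
    linear_combination expand
      + ((σ * (velC U i - vs i) + (1 - σ) * (velC Ut i - vs i)) / 2) * eC
  -- final accounting
  rw [div_lt_iff₀ hα0]
  have hnu20 : 0 ≤ normSq3 (fun j => velC U j - vs j) := normSq3_nonneg _
  have hnut20 : 0 ≤ normSq3 (fun j => velC Ut j - vs j) := normSq3_nonneg _
  have hnb20 : 0 ≤ normSq3 (fun j => BC U j - Bs j) := normSq3_nonneg _
  have hnbt20 : 0 ≤ normSq3 (fun j => BC Ut j - Bs j) := normSq3_nonneg _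
  have m1 : (sFast p U i + fCoup U Ut σ)
        * (intE U + U 0 * normSq3 (fun j => velC U j - vs j) / 2)
      + (α - (|velC U i| + sFast p U i + fCoup U Ut σ)) * intE U
      ≤ (α - velC U i) * (intE U + U 0 * normSq3 (fun j => velC U j - vs j) / 2) := by
    apply mulb ?_ (by linarith [mul_nonneg hρ.le hnu20]) hE.le (by linarith)
    have := le_abs_self (velC U i); linarith
  have m2 : (sFast pt Ut i + fCoup U Ut σ)
        * (intE Ut + Ut 0 * normSq3 (fun j => velC Ut j - vs j) / 2)
      + (α - (|velC Ut i| + sFast pt Ut i + fCoup U Ut σ)) * intE Ut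
      ≤ (α + velC Ut i) * (intE Ut + Ut 0 * normSq3 (fun j => velC Ut j - vs j) / 2) := by
    apply mulb ?_ (by linarith [mul_nonneg hρt.le hnut20]) hEt.le (by linarith)
    have := neg_abs_le (velC Ut i); linarith
  have m3 : (max (sFast p U i) (sFast pt Ut i) + fCoup U Ut σ)
        * (normSq3 (fun j => BC U j - Bs j) / 2) + 0 * 0
      ≤ (α - (σ * velC U i + (1 - σ) * velC Ut i))
        * (normSq3 (fun j => BC U j - Bs j) / 2) := by
    apply mulb ?_ (by linarith) le_rfl le_rfl
    have := le_abs_self (σ * velC U i + (1 - σ) * velC Ut i); linarith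
  have m4 : (max (sFast p U i) (sFast pt Ut i) + fCoup U Ut σ)
        * (normSq3 (fun j => BC Ut j - Bs j) / 2) + 0 * 0
      ≤ (α + (σ * velC U i + (1 - σ) * velC Ut i))
        * (normSq3 (fun j => BC Ut j - Bs j) / 2) := by
    apply mulb ?_ (by linarith) le_rfl le_rfl
    have := neg_abs_le (σ * velC U i + (1 - σ) * velC Ut i); linarith
  have s3 : sFast p U i * (normSq3 (fun j => BC U j - Bs j) / 2)
      ≤ max (sFast p U i) (sFast pt Ut i) * (normSq3 (fun j => BC U j - Bs j) / 2) :=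
    mul_le_mul_of_nonneg_right (le_max_left _ _) (by linarith [normSq3_nonneg (fun j => BC U j - Bs j)])
  have s4 : sFast pt Ut i * (normSq3 (fun j => BC Ut j - Bs j) / 2)
      ≤ max (sFast p U i) (sFast pt Ut i) * (normSq3 (fun j => BC Ut j - Bs j) / 2) :=
    mul_le_mul_of_nonneg_right (le_max_right _ _) (by linarith [normSq3_nonneg (fun j => BC Ut j - Bs j)])
  have FE1 : 0 ≤ fCoup U Ut σ * intE U := mul_nonneg hF0 hE.le
  have FE2 : 0 ≤ fCoup U Ut σ * intE Ut := mul_nonneg hF0 hEt.le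
  have pos1 : 0 < (α - (|velC U i| + sFast p U i + fCoup U Ut σ)) * intE U :=
    mul_pos (by linarith) hE
  have pos2 : 0 < (α - (|velC Ut i| + sFast pt Ut i + fCoup U Ut σ)) * intE Ut :=
    mul_pos (by linarith) hEt
  have a1 := le_abs_self (p * (velC U i - vs i)
      + (velC U i - vs i) * dot3 (BC U) (fun j => BC U j - Bs j)
      - BC U i * dot3 (fun j => velC U j - vs j) (fun j => BC U j - Bs j))
  have a2 := neg_abs_le (pt * (velC Ut i - vs i)
      + (velC Ut i - vs i) * dot3 (BC Ut) (fun j => BC Ut j - Bs j)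
      - BC Ut i * dot3 (fun j => velC Ut j - vs j) (fun j => BC Ut j - Bs j))
  have a3 := le_abs_self ((σ * (velC U i - vs i) + (1 - σ) * (velC Ut i - vs i))
      * dot3 (fun j => BC Ut j - BC U j) (fun j => (BC U j - Bs j) + (BC Ut j - Bs j)) / 2)
  linarith [key, m1, m2, m3, m4, s3, s4, FE1, FE2, pos1, pos2, star1, star2, habs,
    a1, a2, a3]
lemma dot8_add (x y n : Fin 8 → ℝ) : dot8 (x + y) n = dot8 x n + dot8 y n := by
  simp [dot8, Pi.add_apply, add_mul, Finset.sum_add_distrib]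

lemma dot8_smul (r : ℝ) (x n : Fin 8 → ℝ) : dot8 (r • x) n = r * dot8 x n := by
  simp [dot8, Pi.smul_apply, smul_eq_mul, Finset.mul_sum, mul_assoc]

lemma dot8_sum {ι : Type*} (s : Finset ι) (f : ι → Fin 8 → ℝ) (n : Fin 8 → ℝ) :
    dot8 (∑ i ∈ s, f i) n = ∑ i ∈ s, dot8 (f i) n := by
  simp only [dot8, Finset.sum_apply, Finset.sum_mul]
  exact Finset.sum_comm

lemma intE_eq_dot8 (W : Fin 8 → ℝ) (hW : W 0 ≠ 0) :
    intE W = dot8 W (nstar (velC W) (BC W)) + normSq3 (BC W) / 2 := by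
  rw [state_identity1 W hW (velC W) (BC W)]
  simp [normSq3]

lemma alphaSig_pos (i : Fin 3) {U Ut : Fin 8 → ℝ} {p pt : ℝ}
    (hU : U ∈ admisSet) (hp : 0 < p) (σ : ℝ) :
    0 < alphaSig i U Ut p pt σ := by
  rw [alphaSig]
  have hs := sFast_pos hU hp i
  have h1 := abs_nonneg (velC U i)
  have h2 := fCoup_nonneg U Ut σ
  have hm1 : |velC U i| + sFast p U i
      ≤ max (max (|velC U i| + sFast p U i) (|velC Ut i| + sFast pt Ut i))
          (|σ * velC U i + (1 - σ) * velC Ut i| + max (sFast p U i) (sFast pt Ut i)) :=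
    le_trans (le_max_left _ _) (le_max_left _ _)
  linarith

set_option maxHeartbeats 1000000 in
lemma pair_rho (i : Fin 3) {U Ut : Fin 8 → ℝ} {p pt : ℝ}
    (hU : U ∈ admisSet) (hUt : Ut ∈ admisSet) (hp : 0 < p) (hpt : 0 < pt)
    {α σ : ℝ} (hσα : alphaSig i U Ut p pt σ < α) :
    0 < (U - α⁻¹ • flux p i U + Ut + α⁻¹ • flux pt i Ut) 0 := by
  have hρ : 0 < U 0 := hU.1
  have hρt : 0 < Ut 0 := hUt.1
  rw [alphaSig] at hσα
  have hS0 : 0 ≤ sFast p U i := (sFast_facts hU hp i).1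
  have hSt0 : 0 ≤ sFast pt Ut i := (sFast_facts hUt hpt i).1
  have hF0 : 0 ≤ fCoup U Ut σ := fCoup_nonneg U Ut σ
  have hm1 : |velC U i| + sFast p U i
      ≤ max (max (|velC U i| + sFast p U i) (|velC Ut i| + sFast pt Ut i))
          (|σ * velC U i + (1 - σ) * velC Ut i| + max (sFast p U i) (sFast pt Ut i)) :=
    le_trans (le_max_left _ _) (le_max_left _ _)
  have hm2 : |velC Ut i| + sFast pt Ut i
      ≤ max (max (|velC U i| + sFast p U i) (|velC Ut i| + sFast pt Ut i))
          (|σ * velC U i + (1 - σ) * velC Ut i| + max (sFast p U i) (sFast pt Ut i)) :=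
    le_trans (le_max_right _ _) (le_max_left _ _)
  have h1 : |velC U i| < α := by linarith
  have h2 : |velC Ut i| < α := by linarith
  have hα0 : 0 < α := lt_of_le_of_lt (abs_nonneg _) h1
  have e : (U - α⁻¹ • flux p i U + Ut + α⁻¹ • flux pt i Ut) 0
      = U 0 * (α - velC U i) / α + Ut 0 * (α + velC Ut i) / α := by
    have e1 : flux p i U 0 = U 0 * velC U i := rfl
    have e2 : flux pt i Ut 0 = Ut 0 * velC Ut i := rfl
    simp only [Pi.add_apply, Pi.sub_apply, Pi.smul_apply, smul_eq_mul, e1, e2]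
    field_simp
    ring
  rw [e]
  have hv1 : velC U i < α := lt_of_le_of_lt (le_abs_self _) h1
  have hv2 : -α < velC Ut i := by
    have := neg_abs_le (velC Ut i); linarith
  apply add_pos
  · apply div_pos (mul_pos hρ (by linarith)) hα0
  · apply div_pos (mul_pos hρt (by linarith)) hα0
lemma split_sum {Q : ℕ} (ω : Fin Q → ℝ) (hωsum : ∑ i, ω i = 1) (a1 a2 n : ℝ)
    (D1 D2 : Fin Q → ℝ) :
    ∑ i, ω i * (a1 * (D1 i + n) + a2 * (D2 i + n))
      = (∑ i, ω i * (a1 * D1 i + a2 * D2 i)) + (a1 + a2) * n := by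
  calc ∑ i, ω i * (a1 * (D1 i + n) + a2 * (D2 i + n))
      = ∑ i, (ω i * (a1 * D1 i + a2 * D2 i) + ω i * ((a1 + a2) * n)) :=
        Finset.sum_congr rfl fun i _ => by ring
    _ = (∑ i, ω i * (a1 * D1 i + a2 * D2 i)) + ∑ i, ω i * ((a1 + a2) * n) :=
        Finset.sum_add_distrib
    _ = (∑ i, ω i * (a1 * D1 i + a2 * D2 i)) + (a1 + a2) * n := by
        rw [← Finset.sum_mul, hωsum, one_mul]

lemma dot8_comb2 (x y n : Fin 8 → ℝ) (a b : ℝ) :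
    dot8 (a • x + b • y) n = a * dot8 x n + b * dot8 y n := by
  simp only [dot8, Pi.add_apply, Pi.smul_apply, smul_eq_mul, Fin.sum_univ_eight]
  ring
set_option maxHeartbeats 2000000 in
/-- 2D generalized Lax–Friedrichs splitting property. -/
theorem gLF_splitting_2D (Q : ℕ) (hQ : 1 ≤ Q)
    (ω : Fin Q → ℝ) (hω : ∀ i, 0 < ω i) (hωsum : ∑ i, ω i = 1)
    (Δx Δy : ℝ) (hΔx : 0 < Δx) (hΔy : 0 < Δy)
    (Ub Ut Uh Uc : Fin Q → Fin 8 → ℝ)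
    (pb pt ph pc : Fin Q → ℝ)
    (hGb : ∀ i, Ub i ∈ admisSet) (hGt : ∀ i, Ut i ∈ admisSet)
    (hGh : ∀ i, Uh i ∈ admisSet) (hGc : ∀ i, Uc i ∈ admisSet)
    (hpb : ∀ i, 0 < pb i) (hpt : ∀ i, 0 < pt i)
    (hph : ∀ i, 0 < ph i) (hpc : ∀ i, 0 < pc i)
    (hDDF : (∑ i, ω i * (Ub i 4 - Ut i 4)) / Δx
          + (∑ i, ω i * (Uh i 5 - Uc i 5)) / Δy = 0)
    (α₁ α₂ : ℝ)
    (hα₁ : ∀ i, alphaInf 0 (Ub i) (Ut i) (pb i) (pt i) < α₁)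
    (hα₂ : ∀ i, alphaInf 1 (Uh i) (Uc i) (ph i) (pc i) < α₂) :
    (2 * (α₁ / Δx + α₂ / Δy))⁻¹ •
      (∑ i, ω i •
        ((α₁ / Δx) • (Ub i - α₁⁻¹ • flux (pb i) 0 (Ub i)
                      + Ut i + α₁⁻¹ • flux (pt i) 0 (Ut i))
         + (α₂ / Δy) • (Uh i - α₂⁻¹ • flux (ph i) 1 (Uh i)
                      + Uc i + α₂⁻¹ • flux (pc i) 1 (Uc i))))
      ∈ admisSet := by
  have hQne : Nonempty (Fin Q) := ⟨⟨0, hQ⟩⟩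
  simp only [alphaInf] at hα₁ hα₂
  choose σ1 hσ1 using fun i => exists_lt_of_ciInf_lt (hα₁ i)
  choose σ2 hσ2 using fun i => exists_lt_of_ciInf_lt (hα₂ i)
  have i0 : Fin Q := ⟨0, hQ⟩
  have hα₁0 : 0 < α₁ :=
    lt_trans (alphaSig_pos 0 (hGb ⟨0, hQ⟩) (hpb ⟨0, hQ⟩) (σ1 ⟨0, hQ⟩)) (hσ1 ⟨0, hQ⟩)
  have hα₂0 : 0 < α₂ :=
    lt_trans (alphaSig_pos 1 (hGh ⟨0, hQ⟩) (hph ⟨0, hQ⟩) (σ2 ⟨0, hQ⟩)) (hσ2 ⟨0, hQ⟩)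
  have hc : 0 < 2 * (α₁ / Δx + α₂ / Δy) := by positivity
  have ha1 : 0 < α₁ / Δx := div_pos hα₁0 hΔx
  have ha2 : 0 < α₂ / Δy := div_pos hα₂0 hΔy
  set W := (2 * (α₁ / Δx + α₂ / Δy))⁻¹ •
      (∑ i, ω i •
        ((α₁ / Δx) • (Ub i - α₁⁻¹ • flux (pb i) 0 (Ub i)
                      + Ut i + α₁⁻¹ • flux (pt i) 0 (Ut i))
         + (α₂ / Δy) • (Uh i - α₂⁻¹ • flux (ph i) 1 (Uh i)
                      + Uc i + α₂⁻¹ • flux (pc i) 1 (Uc i)))) with hWdef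
  -- positivity of the density
  have hW0pos : 0 < W 0 := by
    rw [hWdef]
    simp only [Pi.smul_apply, smul_eq_mul, Finset.sum_apply, Pi.add_apply, Pi.sub_apply]
    apply mul_pos (inv_pos.mpr hc)
    apply Finset.sum_pos _ Finset.univ_nonempty
    intro i _
    have r1 := pair_rho 0 (hGb i) (hGt i) (hpb i) (hpt i) (hσ1 i)
    have r2 := pair_rho 1 (hGh i) (hGc i) (hph i) (hpc i) (hσ2 i)
    simp only [Pi.add_apply, Pi.sub_apply, Pi.smul_apply, smul_eq_mul] at r1 r2
    exact mul_pos (hω i) (add_pos (mul_pos ha1 r1) (mul_pos ha2 r2))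
  -- positivity of the internal energy
  set vsW := velC W with hvs
  set BsW := BC W with hBs
  have hsplit : ∑ i, ω i *
        ((α₁ / Δx) * (dot8 (Ub i - α₁⁻¹ • flux (pb i) 0 (Ub i)
                      + Ut i + α₁⁻¹ • flux (pt i) 0 (Ut i)) (nstar vsW BsW) + normSq3 BsW)
         + (α₂ / Δy) * (dot8 (Uh i - α₂⁻¹ • flux (ph i) 1 (Uh i)
                      + Uc i + α₂⁻¹ • flux (pc i) 1 (Uc i)) (nstar vsW BsW) + normSq3 BsW))
      = (∑ i, ω i *
          ((α₁ / Δx) * dot8 (Ub i - α₁⁻¹ • flux (pb i) 0 (Ub i)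
                      + Ut i + α₁⁻¹ • flux (pt i) 0 (Ut i)) (nstar vsW BsW)
           + (α₂ / Δy) * dot8 (Uh i - α₂⁻¹ • flux (ph i) 1 (Uh i)
                      + Uc i + α₂⁻¹ • flux (pc i) 1 (Uc i)) (nstar vsW BsW)))
        + (α₁ / Δx + α₂ / Δy) * normSq3 BsW :=
    split_sum ω hωsum (α₁ / Δx) (α₂ / Δy) (normSq3 BsW)
      (fun i => dot8 (Ub i - α₁⁻¹ • flux (pb i) 0 (Ub i)
                      + Ut i + α₁⁻¹ • flux (pt i) 0 (Ut i)) (nstar vsW BsW))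
      (fun i => dot8 (Uh i - α₂⁻¹ • flux (ph i) 1 (Uh i)
                      + Uc i + α₂⁻¹ • flux (pc i) 1 (Uc i)) (nstar vsW BsW))
  have hIE : intE W = (2 * (α₁ / Δx + α₂ / Δy))⁻¹ *
      ∑ i, ω i *
        ((α₁ / Δx) * (dot8 (Ub i - α₁⁻¹ • flux (pb i) 0 (Ub i)
                      + Ut i + α₁⁻¹ • flux (pt i) 0 (Ut i)) (nstar vsW BsW) + normSq3 BsW)
         + (α₂ / Δy) * (dot8 (Uh i - α₂⁻¹ • flux (ph i) 1 (Uh i)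
                      + Uc i + α₂⁻¹ • flux (pc i) 1 (Uc i)) (nstar vsW BsW) + normSq3 BsW)) := by
    rw [intE_eq_dot8 W hW0pos.ne', ← hvs, ← hBs]
    conv_lhs => rw [hWdef]
    simp only [dot8_sum, dot8_smul, dot8_comb2]
    rw [hsplit]
    have hhalf : (2 * (α₁ / Δx + α₂ / Δy))⁻¹ * (α₁ / Δx + α₂ / Δy) = 1 / 2 := by
      field_simp
    linear_combination (-(normSq3 BsW)) * hhalf
  -- the discrete divergence-free cancellation
  set κ := dot3 vsW BsW with hκ
  have hzero : ∑ i, ω i *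
      ((α₁ / Δx) * ((Ut i 4 - Ub i 4) * κ / α₁)
        + (α₂ / Δy) * ((Uc i 5 - Uh i 5) * κ / α₂)) = 0 := by
    have e1 : ∀ i : Fin Q, ω i *
        ((α₁ / Δx) * ((Ut i 4 - Ub i 4) * κ / α₁)
          + (α₂ / Δy) * ((Uc i 5 - Uh i 5) * κ / α₂))
        = κ * (ω i * (Ut i 4 - Ub i 4) / Δx + ω i * (Uc i 5 - Uh i 5) / Δy) := by
      intro i
      field_simp
    rw [Finset.sum_congr rfl fun i _ => e1 i, ← Finset.mul_sum]
    have e3 : ∑ i, ω i * (Ut i 4 - Ub i 4) = -(∑ i, ω i * (Ub i 4 - Ut i 4)) := by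
      have h : (∑ i, ω i * (Ut i 4 - Ub i 4)) + (∑ i, ω i * (Ub i 4 - Ut i 4)) = 0 := by
        rw [← Finset.sum_add_distrib]
        exact Finset.sum_eq_zero fun i _ => by ring
      linarith
    have e4 : ∑ i, ω i * (Uc i 5 - Uh i 5) = -(∑ i, ω i * (Uh i 5 - Uc i 5)) := by
      have h : (∑ i, ω i * (Uc i 5 - Uh i 5)) + (∑ i, ω i * (Uh i 5 - Uc i 5)) = 0 := by
        rw [← Finset.sum_add_distrib]
        exact Finset.sum_eq_zero fun i _ => by ring
      linarith
    have e5 : ∑ i, (ω i * (Ut i 4 - Ub i 4) / Δx + ω i * (Uc i 5 - Uh i 5) / Δy) = 0 := by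
      rw [Finset.sum_add_distrib, ← Finset.sum_div, ← Finset.sum_div, e3, e4, neg_div,
        neg_div]
      linarith [hDDF]
    rw [e5, mul_zero]
  -- strict comparison term by term
  have hsum_lt : ∑ i, ω i *
      ((α₁ / Δx) * ((Ut i 4 - Ub i 4) * κ / α₁)
        + (α₂ / Δy) * ((Uc i 5 - Uh i 5) * κ / α₂))
      < ∑ i, ω i *
        ((α₁ / Δx) * (dot8 (Ub i - α₁⁻¹ • flux (pb i) 0 (Ub i)
                      + Ut i + α₁⁻¹ • flux (pt i) 0 (Ut i)) (nstar vsW BsW) + normSq3 BsW)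
         + (α₂ / Δy) * (dot8 (Uh i - α₂⁻¹ • flux (ph i) 1 (Uh i)
                      + Uc i + α₂⁻¹ • flux (pc i) 1 (Uc i)) (nstar vsW BsW) + normSq3 BsW)) := by
    apply Finset.sum_lt_sum_of_nonempty Finset.univ_nonempty
    intro i _
    have k1 : (Ut i 4 - Ub i 4) * κ / α₁
        < dot8 (Ub i - α₁⁻¹ • flux (pb i) 0 (Ub i)
            + Ut i + α₁⁻¹ • flux (pt i) 0 (Ut i)) (nstar vsW BsW) + normSq3 BsW :=
      pair_key 0 (hGb i) (hGt i) (hpb i) (hpt i) (hσ1 i) vsW BsW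
    have k2 : (Uc i 5 - Uh i 5) * κ / α₂
        < dot8 (Uh i - α₂⁻¹ • flux (ph i) 1 (Uh i)
            + Uc i + α₂⁻¹ • flux (pc i) 1 (Uc i)) (nstar vsW BsW) + normSq3 BsW :=
      pair_key 1 (hGh i) (hGc i) (hph i) (hpc i) (hσ2 i) vsW BsW
    exact mul_lt_mul_of_pos_left
      (add_lt_add (mul_lt_mul_of_pos_left k1 ha1) (mul_lt_mul_of_pos_left k2 ha2)) (hω i)
  have hIEpos : 0 < intE W := by
    rw [hIE]
    apply mul_pos (inv_pos.mpr hc)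
    linarith [hzero, hsum_lt]
  exact ⟨hW0pos, hIEpos⟩
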